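/- Let X_t and X_{t'} be jointly distributed random vectors with n finite-valued components each, such that X_t and X_{t'} have the same marginal distribution (stationarity). Let p_{V|X} be a k-synergistic channel for X_t, and let V_t and V_{t'} be obtained by applying this channel to X_t and X_{t'} respectively, so that V_t−X_t−X_{t'}−V_{t'} is a Markov chain. Then p_{V|X} is also a k-synergistic channel for X_{t'}, and 𝒢_⋆^(k)(X_t;X_{t'}) ≥ I(V_t;V_{t'}). In particular, if the observable is auto-correlated (I(V_t;V_{t'}) > 0), then 𝒢_⋆^(k)(X_t;X_{t'}) > 0 and Syn_⋆^(k)(X_t;X_{t'}) > 0, i.e. every auto-correlated k-synergistic observable of a stationary system is k-th order emergent. -/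

import Mathlib

/-!
Framework: finite probability.  A finite sample space `Ω` carries a probability
mass function `μ : Ω → ℝ`; random variables are functions on `Ω`.
-/

noncomputable section

open scoped BigOperators

attribute [local instance] Classical.propDecidable

variable {Ω : Type} [Fintype Ω]

/-- The probability that the random variable `f` takes the value `a`, under the pmf `μ`. -/
def prEq (μ : Ω → ℝ) {A : Type} (f : Ω → A) (a : A) : ℝ :=
  ∑ ω, if f ω = a then μ ω else 0

/-- `μ` is a probability mass function on the finite sample space `Ω`. -/
def IsPMF (μ : Ω → ℝ) : Prop :=
  (∀ ω, 0 ≤ μ ω) ∧ ∑ ω, μ ω = 1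

/-- The Markov chain `f − g − h`: `f` and `h` are conditionally independent given `g`. -/
def MarkovChain (μ : Ω → ℝ) {A B C : Type} (f : Ω → A) (g : Ω → B) (h : Ω → C) : Prop :=
  ∀ a b c,
    prEq μ (fun ω => (f ω, g ω, h ω)) (a, b, c) * prEq μ g b =
      prEq μ (fun ω => (f ω, g ω)) (a, b) * prEq μ (fun ω => (g ω, h ω)) (b, c)

/-- Statistical independence of two random variables. -/
def IndepRV (μ : Ω → ℝ) {A B : Type} (f : Ω → A) (g : Ω → B) : Prop :=
  ∀ a b, prEq μ (fun ω => (f ω, g ω)) (a, b) = prEq μ f a * prEq μ g b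

/-- Shannon mutual information `I(f;g)`. -/
def mutInfo (μ : Ω → ℝ) {A B : Type} (f : Ω → A) (g : Ω → B) : ℝ :=
  ∑ a ∈ Finset.univ.image f, ∑ b ∈ Finset.univ.image g,
    prEq μ (fun ω => (f ω, g ω)) (a, b) *
      Real.log (prEq μ (fun ω => (f ω, g ω)) (a, b) / (prEq μ f a * prEq μ g b))

/-- Conditional mutual information `I(f;g|h)`. -/
def condMutInfo (μ : Ω → ℝ) {A B C : Type} (f : Ω → A) (g : Ω → B) (h : Ω → C) : ℝ :=
  ∑ a ∈ Finset.univ.image f, ∑ b ∈ Finset.univ.image g, ∑ c ∈ Finset.univ.image h,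
    prEq μ (fun ω => (f ω, g ω, h ω)) (a, b, c) *
      Real.log ((prEq μ h c * prEq μ (fun ω => (f ω, g ω, h ω)) (a, b, c)) /
        (prEq μ (fun ω => (f ω, h ω)) (a, c) * prEq μ (fun ω => (g ω, h ω)) (b, c)))

/-- Conditional entropy `H(f|g)`. -/
def condEntropyRV (μ : Ω → ℝ) {A B : Type} (f : Ω → A) (g : Ω → B) : ℝ :=
  -∑ a ∈ Finset.univ.image f, ∑ b ∈ Finset.univ.image g,
    prEq μ (fun ω => (f ω, g ω)) (a, b) *
      Real.log (prEq μ (fun ω => (f ω, g ω)) (a, b) / prEq μ g b)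

/-- The sub-vector `X^α` of the random vector `X`, for a set of indices `α ⊆ [n]`. -/
def subvec {n : ℕ} {𝓧 : Fin n → Type} (X : Ω → ∀ i, 𝓧 i) (α : Finset (Fin n)) :
    Ω → ∀ i : α, 𝓧 i :=
  fun ω i => X ω i

/-- The collection of all subsets of `[n]` of cardinality `k`. -/
def kSets (n k : ℕ) : Finset (Finset (Fin n)) :=
  Finset.univ.filter fun α => α.card = k

/-- `c` is a channel (conditional probability kernel) from `A` to the finite alphabet `V`. -/
def IsChannel {A V : Type} [Fintype V] (c : A → V → ℝ) : Prop :=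
  ∀ a, (∀ v, 0 ≤ c a v) ∧ ∑ v, c a v = 1

/-- The joint pmf on `Ω × V` obtained by feeding the random variable `X` into the
channel `c`. -/
def chanPMF {Ω : Type} (μ : Ω → ℝ) {A V : Type} (X : Ω → A) (c : A → V → ℝ) :
    Ω × V → ℝ :=
  fun p => μ p.1 * c (X p.1) p.2

/-- The joint pmf on `Ω × V × U` obtained by feeding `X` into `c` and `Y` into `d`
(conditionally independently given `Ω`). -/
def chanPMF₂ {Ω : Type} (μ : Ω → ℝ) {A B V U : Type}
    (X : Ω → A) (Y : Ω → B) (c : A → V → ℝ) (d : B → U → ℝ) : Ω × V × U → ℝ :=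
  fun p => μ p.1 * c (X p.1) p.2.1 * d (Y p.1) p.2.2

/-- The channel `c` is `k`-synergistic for the random vector `X`: in the induced joint
distribution, the channel output is independent of `X^α` for every `α` with `|α| = k`. -/
def kSynChannel {Ω : Type} [Fintype Ω] (μ : Ω → ℝ) {n : ℕ} {𝓧 : Fin n → Type} {V : Type}
    [Fintype V] (X : Ω → ∀ i, 𝓧 i) (c : (∀ i, 𝓧 i) → V → ℝ) (k : ℕ) : Prop :=
  ∀ α ∈ kSets n k,
    IndepRV (chanPMF μ X c) (fun p => p.2) (fun p (i : α) => X p.1 i)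

/-- `Syn⋆⁽ᵏ⁾(X;Y)`: the maximum information about `Y` extractable from a `k`-synergistic
channel applied to `X` (so that `V − X − Y` is a Markov chain by construction). -/
def SynStar {Ω : Type} [Fintype Ω] (μ : Ω → ℝ) {n : ℕ} {𝓧 𝓨 : Fin n → Type}
    (X : Ω → ∀ i, 𝓧 i) (Y : Ω → ∀ i, 𝓨 i) (k : ℕ) : ℝ :=
  sSup {x : ℝ | ∃ (V : Type) (iV : Fintype V) (c : (∀ i, 𝓧 i) → V → ℝ),
    letI := iV
    IsChannel c ∧ kSynChannel μ X c k ∧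
      x = mutInfo (chanPMF μ X c) (fun p => p.2) (fun p => Y p.1)}

/-- `𝒢⋆⁽ᵏ⁾(X;Y)`: the maximum shared information between outputs of `k`-synergistic
channels applied at both ends (so that `V − X − Y − U` is a Markov chain). -/
def GStar {Ω : Type} [Fintype Ω] (μ : Ω → ℝ) {n : ℕ} {𝓧 𝓨 : Fin n → Type}
    (X : Ω → ∀ i, 𝓧 i) (Y : Ω → ∀ i, 𝓨 i) (k : ℕ) : ℝ :=
  sSup {x : ℝ | ∃ (V U : Type) (iV : Fintype V) (iU : Fintype U)
      (c : (∀ i, 𝓧 i) → V → ℝ) (d : (∀ i, 𝓨 i) → U → ℝ),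
    letI := iV
    letI := iU
    IsChannel c ∧ IsChannel d ∧ kSynChannel μ X c k ∧ kSynChannel μ Y d k ∧
      x = mutInfo (chanPMF₂ μ X Y c d) (fun p => p.2.1) (fun p => p.2.2)}


section Aux

attribute [local instance] Classical.propDecidable

/-- Log-sum inequality. -/
lemma logsum {ι : Type*} (s : Finset ι) (a b : ι → ℝ)
    (ha : ∀ i ∈ s, 0 ≤ a i) (hb : ∀ i ∈ s, 0 ≤ b i)
    (hab : ∀ i ∈ s, b i = 0 → a i = 0) :
    (∑ i ∈ s, a i) * Real.log ((∑ i ∈ s, a i) / (∑ i ∈ s, b i)) ≤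
      ∑ i ∈ s, a i * Real.log (a i / b i) := by
  set A := ∑ i ∈ s, a i with hA
  set B := ∑ i ∈ s, b i with hB
  rcases eq_or_lt_of_le (Finset.sum_nonneg ha) with h0 | hApos
  · -- A = 0
    have hz : ∀ i ∈ s, a i = 0 := by
      intro i hi
      exact (Finset.sum_eq_zero_iff_of_nonneg ha).mp h0.symm i hi
    have : (∑ i ∈ s, a i * Real.log (a i / b i)) = 0 :=
      Finset.sum_eq_zero fun i hi => by rw [hz i hi, zero_mul]
    rw [this, show A = 0 from hA.trans h0.symm, zero_mul]
  · have hBpos : 0 < B := by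
      obtain ⟨i, hi, hai⟩ : ∃ i ∈ s, 0 < a i := by
        by_contra h
        push_neg at h
        have : A ≤ 0 := Finset.sum_nonpos fun i hi => h i hi
        linarith
      have hbi : 0 < b i := by
        rcases (hb i hi).lt_or_eq with h | h
        · exact h
        · exact absurd (hab i hi h.symm) (ne_of_gt hai)
      exact lt_of_lt_of_le hbi (Finset.single_le_sum hb hi)
    have key : ∀ i ∈ s, a i * Real.log (A / B) + a i - b i * (A / B) ≤
        a i * Real.log (a i / b i) := by
      intro i hi
      rcases (ha i hi).lt_or_eq with hai | hai
      · have hbi : 0 < b i := by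
          rcases (hb i hi).lt_or_eq with h | h
          · exact h
          · exact absurd (hab i hi h.symm) (ne_of_gt hai)
        have hx : 0 < (a i / b i) / (A / B) := by positivity
        have := Real.one_sub_inv_le_log_of_pos hx
        have hlog : Real.log ((a i / b i) / (A / B)) =
            Real.log (a i / b i) - Real.log (A / B) :=
          Real.log_div (by positivity) (by positivity)
        rw [hlog] at this
        have hinv : ((a i / b i) / (A / B))⁻¹ = (b i * (A / B)) / a i := by
          field_simp
        rw [hinv] at this
        have := mul_le_mul_of_nonneg_left this (le_of_lt hai)
        have hrw : a i * ((b i * (A / B)) / a i) = b i * (A / B) := by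
          field_simp
        nlinarith [this]
      · rw [← hai]
        have : 0 ≤ b i * (A / B) :=
          mul_nonneg (hb i hi) (le_of_lt (div_pos hApos hBpos))
        simp
        linarith
    have hsum := Finset.sum_le_sum key
    have hl : ∑ i ∈ s, (a i * Real.log (A / B) + a i - b i * (A / B)) =
        A * Real.log (A / B) + A - B * (A / B) := by
      rw [Finset.sum_sub_distrib, Finset.sum_add_distrib, ← Finset.sum_mul,
        ← Finset.sum_mul]
    have hBC : B * (A / B) = A := by field_simp
    rw [hl, hBC] at hsum
    linarith

/-- Mutual information of a joint weight array. -/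
noncomputable def jmi {V U : Type} [Fintype V] [Fintype U] (p : V → U → ℝ) : ℝ :=
  ∑ v, ∑ u, p v u * Real.log (p v u / ((∑ u', p v u') * (∑ v', p v' u)))

lemma jmi_le_log_card {V S : Type} [Fintype V] [Fintype S] (p : V → S → ℝ)
    (hp : ∀ v s, 0 ≤ p v s) (htot : ∑ v, ∑ s, p v s = 1) :
    jmi p ≤ Real.log (Fintype.card S) := by
  classical
  set pS : S → ℝ := fun s => ∑ v, p v s with hpS
  have hpSnn : ∀ s, 0 ≤ pS s := fun s => Finset.sum_nonneg fun v _ => hp v s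
  have step1 : jmi p ≤ ∑ v, ∑ s, p v s * (-Real.log (pS s)) := by
    apply Finset.sum_le_sum; intro v _
    apply Finset.sum_le_sum; intro s _
    rcases (hp v s).lt_or_eq with h | h
    · have hV : 0 < ∑ s', p v s' :=
        lt_of_lt_of_le h (Finset.single_le_sum (fun s' _ => hp v s') (Finset.mem_univ s))
      have hS : 0 < pS s :=
        lt_of_lt_of_le h (Finset.single_le_sum (fun v' _ => hp v' s) (Finset.mem_univ v))
      have : Real.log (p v s / ((∑ s', p v s') * pS s)) ≤ -Real.log (pS s) := by
        rw [Real.log_div (ne_of_gt h) (by positivity),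
          Real.log_mul (ne_of_gt hV) (ne_of_gt hS)]
        have := Real.log_le_log h (Finset.single_le_sum (fun s' _ => hp v s') (Finset.mem_univ s))
        linarith
      exact mul_le_mul_of_nonneg_left this (hp v s)
    · rw [← h]; simp
  have step2 : ∑ v, ∑ s, p v s * (-Real.log (pS s)) = ∑ s, pS s * (-Real.log (pS s)) := by
    rw [Finset.sum_comm]
    exact Finset.sum_congr rfl fun s _ => (Finset.sum_mul ..).symm
  have hpStot : ∑ s, pS s = 1 := by rw [hpS, ← htot]; exact Finset.sum_comm ..
  have hcard : 0 < (Fintype.card S : ℝ) := by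
    have : Nonempty S := by
      by_contra h
      rw [not_nonempty_iff] at h
      simp [Finset.sum_empty] at hpStot
    exact_mod_cast Fintype.card_pos
  have step3 := logsum Finset.univ pS (fun _ => (1 : ℝ)) (fun s _ => hpSnn s)
    (fun _ _ => zero_le_one) (fun s _ h => absurd h one_ne_zero)
  rw [hpStot] at step3
  simp only [Finset.sum_const, Finset.card_univ, nsmul_eq_mul, mul_one, one_mul,
    div_one] at step3
  have : Real.log (1 / (Fintype.card S : ℝ)) = -Real.log (Fintype.card S) := by
    rw [one_div, Real.log_inv]
  rw [this] at step3
  calc jmi p ≤ ∑ s, pS s * (-Real.log (pS s)) := step1.trans (le_of_eq step2)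
    _ = -∑ s, pS s * Real.log (pS s) := by rw [← Finset.sum_neg_distrib]; congr 1; ext s; ring
    _ ≤ Real.log (Fintype.card S) := by linarith

lemma jmi_dpi {V S U : Type} [Fintype V] [Fintype S] [Fintype U]
    (q : V → S → ℝ) (hq : ∀ v s, 0 ≤ q v s)
    (e : S → U → ℝ) (he0 : ∀ s u, 0 ≤ e s u) (he1 : ∀ s, ∑ u, e s u = 1) :
    jmi (fun v u => ∑ s, q v s * e s u) ≤ jmi q := by
  classical
  set qV : V → ℝ := fun v => ∑ s, q v s with hqV
  set qS : S → ℝ := fun s => ∑ v, q v s with hqS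
  set p : V → U → ℝ := fun v u => ∑ s, q v s * e s u with hp
  have hpV : ∀ v, (∑ u, p v u) = qV v := by
    intro v
    rw [hp]; simp only
    rw [Finset.sum_comm]
    exact Finset.sum_congr rfl fun s _ => by rw [← Finset.mul_sum, he1, mul_one]
  have hpU : ∀ u, (∑ v, p v u) = ∑ s, qS s * e s u := by
    intro u
    rw [hp]; simp only
    rw [Finset.sum_comm]
    exact Finset.sum_congr rfl fun s _ => (Finset.sum_mul ..).symm
  have main : ∀ v u, p v u * Real.log (p v u / (qV v * (∑ v', p v' u))) ≤
      ∑ s, (q v s * e s u) * Real.log (q v s / (qV v * qS s)) := by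
    intro v u
    have hls := logsum Finset.univ (fun s => q v s * e s u)
      (fun s => qV v * qS s * e s u)
      (fun s _ => mul_nonneg (hq v s) (he0 s u))
      (fun s _ => by
        have h1 : 0 ≤ qV v := Finset.sum_nonneg fun s' _ => hq v s'
        have h2 : 0 ≤ qS s := Finset.sum_nonneg fun v' _ => hq v' s
        have h3 := he0 s u
        positivity)
      (fun s _ hz => by
        show q v s * e s u = 0
        have hz' : qV v * qS s * e s u = 0 := hz
        rcases mul_eq_zero.mp hz' with h | h
        · rcases mul_eq_zero.mp h with h' | h'
          · have hle : q v s ≤ qV v :=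
              Finset.single_le_sum (fun s' _ => hq v s') (Finset.mem_univ s)
            have h0 : q v s = 0 := le_antisymm (h' ▸ hle) (hq v s)
            rw [h0, zero_mul]
          · have hle : q v s ≤ qS s :=
              Finset.single_le_sum (fun v' _ => hq v' s) (Finset.mem_univ v)
            have h0 : q v s = 0 := le_antisymm (h' ▸ hle) (hq v s)
            rw [h0, zero_mul]
        · rw [h, mul_zero])
    have hsb : ∑ s, qV v * qS s * e s u = qV v * ∑ v', p v' u := by
      rw [hpU u, Finset.mul_sum]
      exact Finset.sum_congr rfl fun s _ => by ring
    rw [hsb] at hls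
    refine le_trans hls (le_of_eq (Finset.sum_congr rfl fun s _ => ?_))
    show (q v s * e s u) * Real.log ((q v s * e s u) / (qV v * qS s * e s u)) =
      (q v s * e s u) * Real.log (q v s / (qV v * qS s))
    rcases (he0 s u).lt_or_eq with h | h
    · congr 1
      rw [mul_div_mul_right _ _ (ne_of_gt h)]
    · rw [← h, mul_zero, zero_mul, zero_mul]
  calc jmi p = ∑ v, ∑ u, p v u * Real.log (p v u / (qV v * (∑ v', p v' u))) := by
        unfold jmi
        exact Finset.sum_congr rfl fun v _ => Finset.sum_congr rfl fun u _ => by rw [hpV]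
    _ ≤ ∑ v, ∑ u, ∑ s, (q v s * e s u) * Real.log (q v s / (qV v * qS s)) :=
        Finset.sum_le_sum fun v _ => Finset.sum_le_sum fun u _ => main v u
    _ = ∑ v, ∑ s, q v s * Real.log (q v s / (qV v * qS s)) := by
        refine Finset.sum_congr rfl fun v _ => ?_
        rw [Finset.sum_comm]
        refine Finset.sum_congr rfl fun s _ => ?_
        rw [← Finset.sum_mul, ← Finset.mul_sum, he1, mul_one]
    _ = jmi q := rfl


lemma prEq_pair_marg_left {Ω A B : Type} [Fintype Ω] [Fintype B] (ν : Ω → ℝ)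
    (f : Ω → A) (g : Ω → B) (a : A) :
    prEq ν f a = ∑ b, prEq ν (fun ω => (f ω, g ω)) (a, b) := by
  unfold prEq
  rw [Finset.sum_comm]
  refine Finset.sum_congr rfl fun ω _ => ?_
  by_cases h : f ω = a <;> simp [Prod.ext_iff, h]

lemma prEq_pair_marg_right {Ω A B : Type} [Fintype Ω] [Fintype A] (ν : Ω → ℝ)
    (f : Ω → A) (g : Ω → B) (b : B) :
    prEq ν g b = ∑ a, prEq ν (fun ω => (f ω, g ω)) (a, b) := by
  unfold prEq
  rw [Finset.sum_comm]
  refine Finset.sum_congr rfl fun ω _ => ?_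
  by_cases h : g ω = b <;> simp [Prod.ext_iff, h]

lemma prEq_pair_notmem_left {Ω A B : Type} [Fintype Ω] (ν : Ω → ℝ)
    (f : Ω → A) (g : Ω → B) {a : A} (ha : a ∉ Finset.univ.image f) (b : B) :
    prEq ν (fun ω => (f ω, g ω)) (a, b) = 0 := by
  refine Finset.sum_eq_zero fun ω _ => ?_
  rw [if_neg]
  intro hcontr
  exact ha (Finset.mem_image.mpr ⟨ω, Finset.mem_univ ω, (Prod.ext_iff.mp hcontr).1⟩)

lemma prEq_pair_notmem_right {Ω A B : Type} [Fintype Ω] (ν : Ω → ℝ)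
    (f : Ω → A) (g : Ω → B) (a : A) {b : B} (hb : b ∉ Finset.univ.image g) :
    prEq ν (fun ω => (f ω, g ω)) (a, b) = 0 := by
  refine Finset.sum_eq_zero fun ω _ => ?_
  rw [if_neg]
  intro hcontr
  exact hb (Finset.mem_image.mpr ⟨ω, Finset.mem_univ ω, (Prod.ext_iff.mp hcontr).2⟩)

lemma mutInfo_eq_jmi {Ω A B : Type} [Fintype Ω] [Fintype A] [Fintype B] (ν : Ω → ℝ)
    (f : Ω → A) (g : Ω → B) :
    mutInfo ν f g = jmi (fun a b => prEq ν (fun ω => (f ω, g ω)) (a, b)) := by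
  unfold mutInfo jmi
  rw [Finset.sum_subset (Finset.subset_univ _)]
  · refine Finset.sum_congr rfl fun a _ => ?_
    rw [Finset.sum_subset (Finset.subset_univ _)]
    · refine Finset.sum_congr rfl fun b _ => ?_
      rw [← prEq_pair_marg_left ν f g a, ← prEq_pair_marg_right ν f g b]
    · intro b _ hb
      rw [prEq_pair_notmem_right ν f g a hb, zero_mul]
  · intro a _ ha
    refine Finset.sum_eq_zero fun b _ => ?_
    rw [prEq_pair_notmem_left ν f g ha b, zero_mul]

lemma prEq_chanPMF_gen {Ω A V T : Type} [Fintype Ω] [Fintype A] [Fintype V]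
    (μ : Ω → ℝ) (X : Ω → A) (c : A → V → ℝ) (F : A → V → T) (t : T) :
    prEq (chanPMF μ X c) (fun p => F (X p.1) p.2) t =
      ∑ s, prEq μ X s * ∑ v, (if F s v = t then c s v else 0) := by
  unfold prEq chanPMF
  rw [Fintype.sum_prod_type]
  have hR : ∀ s : A, (∑ ω, if X ω = s then μ ω else 0) * (∑ v, if F s v = t then c s v else 0)
      = ∑ ω, (if X ω = s then μ ω * ∑ v, (if F s v = t then c s v else 0) else 0) := by
    intro s
    rw [Finset.sum_mul]
    exact Finset.sum_congr rfl fun ω _ => by by_cases h : X ω = s <;> simp [h]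
  calc (∑ ω, ∑ v, if F (X ω) v = t then μ ω * c (X ω) v else 0)
      = ∑ ω, μ ω * ∑ v, (if F (X ω) v = t then c (X ω) v else 0) := by
        refine Finset.sum_congr rfl fun ω _ => ?_
        rw [Finset.mul_sum]
        exact Finset.sum_congr rfl fun v _ => by by_cases h : F (X ω) v = t <;> simp [h]
    _ = ∑ ω, ∑ s, (if X ω = s then μ ω * ∑ v, (if F s v = t then c s v else 0) else 0) := by
        refine Finset.sum_congr rfl fun ω _ => ?_
        rw [Finset.sum_ite_eq]
        simp
    _ = ∑ s, (∑ ω, if X ω = s then μ ω else 0) * (∑ v, if F s v = t then c s v else 0) := by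
        rw [Finset.sum_comm]
        exact Finset.sum_congr rfl fun s _ => (hR s).symm

lemma prEq_chanPMF₂_pair {Ω A B V U : Type} [Fintype Ω] [Fintype V] [Fintype U]
    (μ : Ω → ℝ) (X : Ω → A) (Y : Ω → B) (c : A → V → ℝ) (d : B → U → ℝ) (v : V) (u : U) :
    prEq (chanPMF₂ μ X Y c d) (fun p => (p.2.1, p.2.2)) (v, u) =
      ∑ ω, μ ω * c (X ω) v * d (Y ω) u := by
  unfold prEq chanPMF₂
  rw [Fintype.sum_prod_type]
  refine Finset.sum_congr rfl fun ω _ => ?_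
  rw [Fintype.sum_prod_type]
  simp [Prod.ext_iff, Finset.sum_ite_eq, ite_and]

lemma prEq_chanPMF_pairY {Ω A B V : Type} [Fintype Ω] [Fintype V]
    (μ : Ω → ℝ) (X : Ω → A) (Y : Ω → B) (c : A → V → ℝ) (v : V) (y : B) :
    prEq (chanPMF μ X c) (fun p => (p.2, Y p.1)) (v, y) =
      ∑ ω, if Y ω = y then μ ω * c (X ω) v else 0 := by
  unfold prEq chanPMF
  rw [Fintype.sum_prod_type]
  refine Finset.sum_congr rfl fun ω _ => ?_
  simp [Prod.ext_iff, Finset.sum_ite_eq, ite_and]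

lemma chan_total {Ω A V : Type} [Fintype Ω] [Fintype V] (μ : Ω → ℝ) (hμ1 : ∑ ω, μ ω = 1)
    (X : Ω → A) (c : A → V → ℝ) (hc : IsChannel c) :
    ∑ v : V, ∑ ω, μ ω * c (X ω) v = 1 := by
  rw [Finset.sum_comm]
  rw [show (∑ ω, ∑ v : V, μ ω * c (X ω) v) = ∑ ω, μ ω from
    Finset.sum_congr rfl fun ω _ => by rw [← Finset.mul_sum, (hc _).2, mul_one]]
  exact hμ1

lemma mutInfo_chanPMF₂_le {Ω A B V U : Type} [Fintype Ω] [Fintype V] [Fintype U]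
    (μ : Ω → ℝ) (hμ0 : ∀ ω, 0 ≤ μ ω) (hμ1 : ∑ ω, μ ω = 1) (X : Ω → A) (Y : Ω → B)
    (c : A → V → ℝ) (d : B → U → ℝ) (hc : IsChannel c) (hd : IsChannel d) :
    mutInfo (chanPMF₂ μ X Y c d) (fun p => p.2.1) (fun p => p.2.2) ≤
      Real.log (Fintype.card Ω) := by
  rw [mutInfo_eq_jmi]
  have harr : (fun (a : V) (b : U) =>
      prEq (chanPMF₂ μ X Y c d) (fun ω => ((fun p => p.2.1) ω, (fun p => p.2.2) ω)) (a, b)) =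
      fun v u => ∑ ω, (μ ω * c (X ω) v) * d (Y ω) u := by
    funext v u
    exact prEq_chanPMF₂_pair μ X Y c d v u
  rw [harr]
  have hq : ∀ (v : V) (ω : Ω), 0 ≤ μ ω * c (X ω) v :=
    fun v ω => mul_nonneg (hμ0 ω) ((hc _).1 v)
  exact le_trans
    (jmi_dpi (fun v ω => μ ω * c (X ω) v) hq (fun ω u => d (Y ω) u)
      (fun ω u => (hd _).1 u) (fun ω => (hd _).2))
    (jmi_le_log_card (fun v ω => μ ω * c (X ω) v) hq (chan_total μ hμ1 X c hc))

lemma mutInfo_chanPMF_pairY_le {Ω A B V : Type} [Fintype Ω] [Fintype B] [Fintype V]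
    (μ : Ω → ℝ) (hμ0 : ∀ ω, 0 ≤ μ ω) (hμ1 : ∑ ω, μ ω = 1) (X : Ω → A) (Y : Ω → B)
    (c : A → V → ℝ) (hc : IsChannel c) :
    mutInfo (chanPMF μ X c) (fun p => p.2) (fun p => Y p.1) ≤
      Real.log (Fintype.card Ω) := by
  rw [mutInfo_eq_jmi]
  have harr : (fun (a : V) (b : B) =>
      prEq (chanPMF μ X c) (fun ω => ((fun p => p.2) ω, (fun p => Y p.1) ω)) (a, b)) =
      fun v y => ∑ ω, (μ ω * c (X ω) v) * (if Y ω = y then (1:ℝ) else 0) := by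
    funext v y
    rw [show (∑ ω, (μ ω * c (X ω) v) * (if Y ω = y then (1:ℝ) else 0)) =
        ∑ ω, if Y ω = y then μ ω * c (X ω) v else 0 from
      Finset.sum_congr rfl fun ω _ => by by_cases h : Y ω = y <;> simp [h]]
    exact prEq_chanPMF_pairY μ X Y c v y
  rw [harr]
  have hq : ∀ (v : V) (ω : Ω), 0 ≤ μ ω * c (X ω) v :=
    fun v ω => mul_nonneg (hμ0 ω) ((hc _).1 v)
  exact le_trans
    (jmi_dpi (fun v ω => μ ω * c (X ω) v) hq (fun ω y => if Y ω = y then (1:ℝ) else 0)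
      (fun ω y => by positivity) (fun ω => by simp [Finset.sum_ite_eq]))
    (jmi_le_log_card (fun v ω => μ ω * c (X ω) v) hq (chan_total μ hμ1 X c hc))

lemma mi2_le_miY {Ω A B V U : Type} [Fintype Ω] [Fintype B] [Fintype V] [Fintype U]
    (μ : Ω → ℝ) (hμ0 : ∀ ω, 0 ≤ μ ω) (X : Ω → A) (Y : Ω → B)
    (c : A → V → ℝ) (hc : IsChannel c) (d : B → U → ℝ) (hd : IsChannel d) :
    mutInfo (chanPMF₂ μ X Y c d) (fun p => p.2.1) (fun p => p.2.2) ≤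
      mutInfo (chanPMF μ X c) (fun p => p.2) (fun p => Y p.1) := by
  rw [mutInfo_eq_jmi, mutInfo_eq_jmi]
  set Q : V → B → ℝ := fun v y => ∑ ω, if Y ω = y then μ ω * c (X ω) v else 0 with hQdef
  have hQ : ∀ v y, 0 ≤ Q v y := by
    intro v y
    refine Finset.sum_nonneg fun ω _ => ?_
    by_cases h : Y ω = y
    · rw [if_pos h]; exact mul_nonneg (hμ0 ω) ((hc _).1 v)
    · rw [if_neg h]
  have harrR : (fun (a : V) (b : B) =>
      prEq (chanPMF μ X c) (fun ω => ((fun p => p.2) ω, (fun p => Y p.1) ω)) (a, b)) = Q := by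
    funext v y
    exact prEq_chanPMF_pairY μ X Y c v y
  have harrL : (fun (a : V) (b : U) =>
      prEq (chanPMF₂ μ X Y c d) (fun ω => ((fun p => p.2.1) ω, (fun p => p.2.2) ω)) (a, b)) =
      fun v u => ∑ y, Q v y * d y u := by
    funext v u
    have h1 : prEq (chanPMF₂ μ X Y c d)
        (fun ω => ((fun p => p.2.1) ω, (fun p => p.2.2) ω)) ((v, u) : V × U) =
        ∑ ω, μ ω * c (X ω) v * d (Y ω) u := prEq_chanPMF₂_pair μ X Y c d v u
    rw [h1, hQdef]
    calc (∑ ω, μ ω * c (X ω) v * d (Y ω) u)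
        = ∑ ω, ∑ y, (if Y ω = y then μ ω * c (X ω) v * d y u else 0) := by
          refine Finset.sum_congr rfl fun ω _ => ?_
          rw [Finset.sum_ite_eq]
          simp
      _ = ∑ y, (∑ ω, if Y ω = y then μ ω * c (X ω) v else 0) * d y u := by
          rw [Finset.sum_comm]
          refine Finset.sum_congr rfl fun y _ => ?_
          rw [Finset.sum_mul]
          refine Finset.sum_congr rfl fun ω _ => ?_
          by_cases h : Y ω = y <;> simp [h]
  rw [harrR, harrL]
  exact jmi_dpi Q hQ d (fun y u => (hd _).1 u) (fun y => (hd _).2)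

end Aux

/-!
STATEMENT 8.  If the system `X = X_t`, `X' = X_{t'}` is stationary (equal marginals) and
`c` is a `k`-synergistic channel for `X_t`, applied at both times to give
`V_t − X_t − X_{t'} − V_{t'}`, then `c` is also `k`-synergistic for `X_{t'}` and
`𝒢⋆⁽ᵏ⁾(X_t;X_{t'}) ≥ I(V_t;V_{t'})`.  In particular, if the observable is
auto-correlated (`I(V_t;V_{t'}) > 0`) then `𝒢⋆⁽ᵏ⁾ > 0` and `Syn⋆⁽ᵏ⁾ > 0`: every
auto-correlated `k`-synergistic observable of a stationary system is `k`-th order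
emergent.
-/
theorem autocorrelated_synergistic_observables_are_emergent
    {Ω : Type} [Fintype Ω] (μ : Ω → ℝ) (hμ : IsPMF μ)
    {n : ℕ} {𝓧 : Fin n → Type} [∀ i, Fintype (𝓧 i)]
    (X X' : Ω → ∀ i, 𝓧 i)
    (hstat : ∀ s, prEq μ X s = prEq μ X' s)
    (k : ℕ) {V : Type} [Fintype V]
    (c : (∀ i, 𝓧 i) → V → ℝ) (hc : IsChannel c)
    (hkc : kSynChannel μ X c k) :
    kSynChannel μ X' c k ∧
      mutInfo (chanPMF₂ μ X X' c c) (fun p => p.2.1) (fun p => p.2.2)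
        ≤ GStar μ X X' k ∧
      (0 < mutInfo (chanPMF₂ μ X X' c c) (fun p => p.2.1) (fun p => p.2.2) →
        0 < GStar μ X X' k ∧ 0 < SynStar μ X X' k) := by
  have hsyn' : kSynChannel μ X' c k := by
    intro α hα a b
    have key : ∀ {T : Type} (F : (∀ i, 𝓧 i) → V → T) (t : T),
        prEq (chanPMF μ X' c) (fun p => F (X' p.1) p.2) t =
          prEq (chanPMF μ X c) (fun p => F (X p.1) p.2) t := by
      intro T F t
      rw [prEq_chanPMF_gen μ X' c F t, prEq_chanPMF_gen μ X c F t]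
      exact Finset.sum_congr rfl fun s _ => by rw [hstat s]
    have h1 : prEq (chanPMF μ X' c)
        (fun p => ((p.2 : V), fun i : α => X' p.1 i)) (a, b) =
        prEq (chanPMF μ X c) (fun p => ((p.2 : V), fun i : α => X p.1 i)) (a, b) :=
      key (fun s v => (v, fun i : α => s i)) (a, b)
    have h2 : prEq (chanPMF μ X' c) (fun p => (p.2 : V)) a =
        prEq (chanPMF μ X c) (fun p => (p.2 : V)) a :=
      key (fun _ v => v) a
    have h3 : prEq (chanPMF μ X' c) (fun p (i : α) => X' p.1 i) b =
        prEq (chanPMF μ X c) (fun p (i : α) => X p.1 i) b :=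
      key (fun s _ => fun i : α => s i) b
    exact h1.trans ((hkc α hα a b).trans (congrArg₂ (· * ·) h2.symm h3.symm))
  have hbddG : BddAbove {x : ℝ | ∃ (V' U' : Type) (iV : Fintype V') (iU : Fintype U')
      (c' : (∀ i, 𝓧 i) → V' → ℝ) (d' : (∀ i, 𝓧 i) → U' → ℝ),
      letI := iV
      letI := iU
      IsChannel c' ∧ IsChannel d' ∧ kSynChannel μ X c' k ∧ kSynChannel μ X' d' k ∧
        x = mutInfo (chanPMF₂ μ X X' c' d') (fun p => p.2.1) (fun p => p.2.2)} := by
    refine ⟨Real.log (Fintype.card Ω), ?_⟩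
    rintro x ⟨V', U', iV, iU, c', d', hc', hd', -, -, rfl⟩
    exact mutInfo_chanPMF₂_le μ hμ.1 hμ.2 X X' c' d' hc' hd'
  have hmemG : mutInfo (chanPMF₂ μ X X' c c) (fun p => p.2.1) (fun p => p.2.2) ∈
      {x : ℝ | ∃ (V' U' : Type) (iV : Fintype V') (iU : Fintype U')
      (c' : (∀ i, 𝓧 i) → V' → ℝ) (d' : (∀ i, 𝓧 i) → U' → ℝ),
      letI := iV
      letI := iU
      IsChannel c' ∧ IsChannel d' ∧ kSynChannel μ X c' k ∧ kSynChannel μ X' d' k ∧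
        x = mutInfo (chanPMF₂ μ X X' c' d') (fun p => p.2.1) (fun p => p.2.2)} :=
    ⟨V, V, inferInstance, inferInstance, c, c, hc, hc, hkc, hsyn', rfl⟩
  have hle : mutInfo (chanPMF₂ μ X X' c c) (fun p => p.2.1) (fun p => p.2.2)
      ≤ GStar μ X X' k := le_csSup hbddG hmemG
  refine ⟨hsyn', hle, fun hpos => ⟨lt_of_lt_of_le hpos hle, ?_⟩⟩
  have hbddS : BddAbove {x : ℝ | ∃ (V' : Type) (iV : Fintype V')
      (c' : (∀ i, 𝓧 i) → V' → ℝ),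
      letI := iV
      IsChannel c' ∧ kSynChannel μ X c' k ∧
        x = mutInfo (chanPMF μ X c') (fun p => p.2) (fun p => X' p.1)} := by
    refine ⟨Real.log (Fintype.card Ω), ?_⟩
    rintro x ⟨V', iV, c', hc', -, rfl⟩
    exact mutInfo_chanPMF_pairY_le μ hμ.1 hμ.2 X X' c' hc'
  have hmemS : mutInfo (chanPMF μ X c) (fun p => p.2) (fun p => X' p.1) ∈
      {x : ℝ | ∃ (V' : Type) (iV : Fintype V')
      (c' : (∀ i, 𝓧 i) → V' → ℝ),
      letI := iV
      IsChannel c' ∧ kSynChannel μ X c' k ∧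
        x = mutInfo (chanPMF μ X c') (fun p => p.2) (fun p => X' p.1)} :=
    ⟨V, inferInstance, c, hc, hkc, rfl⟩
  have hdpi : mutInfo (chanPMF₂ μ X X' c c) (fun p => p.2.1) (fun p => p.2.2) ≤
      mutInfo (chanPMF μ X c) (fun p => p.2) (fun p => X' p.1) :=
    mi2_le_miY μ hμ.1 X X' c hc c hc
  exact lt_of_lt_of_le hpos (hdpi.trans (le_csSup hbddS hmemS))
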